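/- Let G be a simple graph on a finite vertex set. Then f(G) = 0 if and only if G is complete bipartite, i.e., there is a partition of the vertex set of G into two (possibly empty) parts such that the edges of G are exactly the pairs with one endpoint in each part. -/

import Mathlib

open Finset

open Classical in
/-- A triple of distinct vertices is *frustrated* if it induces an odd number of edges. -/
noncomputable def frustrated {V : Type*} (G : SimpleGraph V) (u v w : V) : Prop :=
  Odd ((if G.Adj u v then 1 else 0) + (if G.Adj u w then 1 else 0) +
       (if G.Adj v w then 1 else 0) : ℕ)

/-- The number of frustrated triangles of `G`: the number of 3-element vertex subsets
inducing an odd number of edges. -/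
noncomputable def fCount {V : Type*} [Fintype V] [DecidableEq V] (G : SimpleGraph V) : ℕ := by
  classical
  exact ((Finset.univ.powersetCard 3).filter
    (fun s : Finset V => ∃ u v w : V, u ≠ v ∧ u ≠ w ∧ v ≠ w ∧ s = {u, v, w} ∧
      frustrated G u v w)).card

/-- `K` is a complete bipartite graph: the vertex set splits into two (possibly empty)
parts such that the edges are exactly the pairs with one endpoint in each part. -/
def IsCompleteBipartite {V : Type*} (K : SimpleGraph V) : Prop :=
  ∃ X : Set V, ∀ u v : V, K.Adj u v ↔ ((u ∈ X ∧ v ∉ X) ∨ (v ∈ X ∧ u ∉ X))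

open Classical in
lemma fCount_eq_zero_iff_forall {V : Type*} [Fintype V] [DecidableEq V] (G : SimpleGraph V) :
    fCount G = 0 ↔ ∀ u v w : V, u ≠ v → u ≠ w → v ≠ w → ¬ frustrated G u v w := by
  unfold fCount
  rw [Finset.card_eq_zero, Finset.filter_eq_empty_iff]
  constructor
  · intro h u v w h1 h2 h3 hfr
    have hmem : ({u, v, w} : Finset V) ∈ Finset.univ.powersetCard 3 := by
      rw [Finset.mem_powersetCard]
      exact ⟨Finset.subset_univ _, Finset.card_eq_three.mpr ⟨u, v, w, h1, h2, h3, rfl⟩⟩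
    exact h hmem ⟨u, v, w, h1, h2, h3, rfl, hfr⟩
  · rintro h s - ⟨u, v, w, h1, h2, h3, -, hfr⟩
    exact h u v w h1 h2 h3 hfr

theorem fCount_eq_zero_iff_completeBipartite
    {V : Type*} [Fintype V] [DecidableEq V] (G : SimpleGraph V) :
    fCount G = 0 ↔ IsCompleteBipartite G := by
  classical
  rw [fCount_eq_zero_iff_forall]
  constructor
  · intro h
    rcases isEmpty_or_nonempty V with hV | ⟨⟨v₀⟩⟩
    · exact ⟨∅, fun u _ => (IsEmpty.false u).elim⟩
    · refine ⟨{v | G.Adj v₀ v}, fun u v => ?_⟩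
      by_cases huv : u = v
      · subst huv
        simp [G.irrefl]
      by_cases hu : u = v₀
      · subst hu
        simp only [Set.mem_setOf_eq, G.irrefl]
        constructor
        · intro hadj; exact Or.inr ⟨hadj, fun hh => hh.elim⟩
        · rintro (⟨hh, -⟩ | ⟨hh, -⟩)
          · exact hh.elim
          · exact hh
      by_cases hv : v = v₀
      · subst hv
        simp only [Set.mem_setOf_eq, G.irrefl]
        constructor
        · intro hadj; exact Or.inl ⟨G.adj_symm hadj, fun hh => hh.elim⟩
        · rintro (⟨hh, -⟩ | ⟨hh, -⟩)
          · exact G.adj_symm hh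
          · exact hh.elim
      · have hfr := h v₀ u v (Ne.symm hu) (Ne.symm hv) huv
        unfold frustrated at hfr
        simp only [Set.mem_setOf_eq]
        by_cases h1 : G.Adj v₀ u <;> by_cases h2 : G.Adj v₀ v <;>
          by_cases h3 : G.Adj u v <;>
          simp [h1, h2, h3, Nat.odd_iff] at hfr ⊢
  · rintro ⟨X, hX⟩ u v w h1 h2 h3 hfr
    unfold frustrated at hfr
    simp only [hX] at hfr
    by_cases hu : u ∈ X <;> by_cases hv : v ∈ X <;> by_cases hw : w ∈ X <;>
      simp [hu, hv, hw, Nat.odd_iff] at hfr
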